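/- arXiv:1904.01274 — 4 statements merged into one kernel-verified Lean document; each statement's English description precedes it below -/
import Mathlib

section
/- Let K̃_{2m} be the graph on 2m+1 vertices consisting of a complete graph K_{2m} together with one extra vertex adjacent to exactly m of the vertices of the K_{2m}. Then the smallest adjacency eigenvalue of K̃_{2m} tends to -∞ as m → ∞. -/
open Matrix Filter Pointwise

/-- The smallest eigenvalue of a real matrix (infimum of its spectrum). -/
noncomputable def minEigM {n : Type*} [Fintype n] [DecidableEq n] (A : Matrix n n ℝ) : ℝ :=
  sInf (spectrum ℝ A)

/-- The largest eigenvalue of a real matrix (supremum of its spectrum). -/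
noncomputable def maxEigM {n : Type*} [Fintype n] [DecidableEq n] (A : Matrix n n ℝ) : ℝ :=
  sSup (spectrum ℝ A)

/-- The smallest adjacency eigenvalue of a finite simple graph. -/
noncomputable def graphMinEig {V : Type*} [Fintype V] [DecidableEq V] (G : SimpleGraph V) : ℝ := by
  classical exact minEigM (G.adjMatrix ℝ)

/-- The largest adjacency eigenvalue of a finite simple graph. -/
noncomputable def graphMaxEig {V : Type*} [Fintype V] [DecidableEq V] (G : SimpleGraph V) : ℝ := by
  classical exact maxEigM (G.adjMatrix ℝ)

/-- `K̃_{2m}`: the graph on `2m+1` vertices consisting of a complete graph on the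
vertices `1,…,2m` together with the extra vertex `0` adjacent to exactly the `m`
vertices `1,…,m`. -/
def tildeK (m : ℕ) : SimpleGraph (Fin (2 * m + 1)) where
  Adj a b := a ≠ b ∧ ((a ≠ 0 ∧ b ≠ 0) ∨ (a = 0 ∧ (b : ℕ) ≤ m) ∨ (b = 0 ∧ (a : ℕ) ≤ m))
  symm := ⟨by
    rintro a b ⟨h1, h2⟩
    exact ⟨h1.symm, by tauto⟩⟩
  loopless := ⟨by rintro a ⟨h1, _⟩; exact h1 rfl⟩


lemma rayleigh_lb {n : Type*} [Fintype n] [DecidableEq n] [Nonempty n]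
    {A : Matrix n n ℝ} (hA : A.IsHermitian) (x : n → ℝ) :
    sInf (spectrum ℝ A) * (x ⬝ᵥ x) ≤ x ⬝ᵥ (A *ᵥ x) := by
  set μ := sInf (spectrum ℝ A) with hμ
  set B : Matrix n n ℝ := A - algebraMap ℝ (Matrix n n ℝ) μ with hB
  have hBh : B.IsHermitian := by
    refine hA.sub ?_
    simp [Matrix.IsHermitian, Matrix.algebraMap_eq_diagonal]
  have hspec : spectrum ℝ B = spectrum ℝ A - ({μ} : Set ℝ) := by
    rw [spectrum.sub_singleton_eq A μ]
  have hbdd : BddBelow (spectrum ℝ A) := (Matrix.finite_real_spectrum (A := A)).bddBelow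
  have hpos : B.PosSemidef := by
    refine hBh.posSemidef_iff_eigenvalues_nonneg.mpr (Pi.le_def.mpr fun i => show (0:ℝ) ≤ _ from ?_)
    have hm := hBh.eigenvalues_mem_spectrum_real (𝕜 := ℝ) i
    rw [hspec] at hm
    obtain ⟨ν, hν, r, hr, hrr⟩ := hm
    simp only [Set.mem_singleton_iff] at hr
    subst hr
    have : μ ≤ ν := csInf_le hbdd hν
    simp only [← hrr]
    linarith
  have h0 := hpos.dotProduct_mulVec_nonneg x
  have hmv : B *ᵥ x = A *ᵥ x - μ • x := by
    have : (algebraMap ℝ (Matrix n n ℝ)) μ = μ • (1 : Matrix n n ℝ) := Algebra.algebraMap_eq_smul_one μ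
    simp [hB, Matrix.sub_mulVec, this, Matrix.smul_mulVec]
  rw [hmv] at h0
  simp only [star_trivial, dotProduct_sub, dotProduct_smul, smul_eq_mul] at h0
  linarith

lemma tildeK_adj_iff (m : ℕ) (i j : Fin (2 * m + 1)) :
    (tildeK m).Adj i j ↔ ((i : ℕ) ≠ (j : ℕ) ∧
      (((i : ℕ) ≠ 0 ∧ (j : ℕ) ≠ 0) ∨ ((i : ℕ) = 0 ∧ (j : ℕ) ≤ m) ∨
        ((j : ℕ) = 0 ∧ (i : ℕ) ≤ m))) := by
  simp [tildeK, Ne, Fin.ext_iff, -Fin.val_eq_zero_iff]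

lemma tildeK_bound (m : ℕ) (hm : 1 ≤ m) [inst : DecidableRel (tildeK m).Adj] :
    sInf (spectrum ℝ ((tildeK m).adjMatrix ℝ)) ≤ -(Real.sqrt (2 * m) + 1) / 2 := by
  set s : ℝ := Real.sqrt (2 * m) with hs
  have hs0 : 0 ≤ s := Real.sqrt_nonneg _
  have hs2 : s ^ 2 = 2 * m := Real.sq_sqrt (by positivity)
  set A := (tildeK m).adjMatrix ℝ with hA
  have hAh : A.IsHermitian := by
    ext i j
    simp only [hA, Matrix.conjTranspose_apply, star_trivial, SimpleGraph.adjMatrix_apply]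
    exact if_congr ((tildeK m).adj_comm j i) rfl rfl
  -- test vector
  set y : ℕ → ℝ := fun k => if k = 0 then s else if k ≤ m then -1 else 1 with hy
  set u : ℕ → ℝ := fun k => if k = 0 then 0 else 1 with hu
  set w : ℕ → ℝ := fun k => if k ≠ 0 ∧ k ≤ m then 1 else 0 with hw
  set x : Fin (2 * m + 1) → ℝ := fun i => y i with hx
  -- sums
  have card1 : (Finset.range (2 * m + 1)).filter (fun k => k ≠ 0 ∧ k ≤ m) = Finset.Ico 1 (m + 1) := by
    ext k; simp; omega
  have card2 : (Finset.range (2 * m + 1)).filter (fun k => ¬ k = 0) = Finset.Ico 1 (2 * m + 1) := by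
    ext k; simp; omega
  have S1 : ∑ i : Fin (2 * m + 1), u i * x i = 0 := by
    have : ∀ k : ℕ, u k * y k = (if k ≠ 0 ∧ k ≤ m then (-1 : ℝ) else 0) + (if m < k then 1 else 0) := by
      intro k
      simp only [hu, hy]
      split_ifs
      all_goals try ring
      all_goals exfalso; omega
    simp only [hx]
    rw [Fin.sum_univ_eq_sum_range (fun k => u k * y k)]
    rw [Finset.sum_congr rfl (fun k _ => this k), Finset.sum_add_distrib]
    rw [← Finset.sum_filter, ← Finset.sum_filter, card1]
    have card3 : (Finset.range (2 * m + 1)).filter (fun k => m < k) = Finset.Ico (m + 1) (2 * m + 1) := by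
      ext k; simp; omega
    rw [card3, Finset.sum_const, Finset.sum_const, Nat.card_Ico, Nat.card_Ico]
    have e1 : m + 1 - 1 = m := by omega
    have e2 : 2 * m + 1 - (m + 1) = m := by omega
    rw [e1, e2]
    simp
  have S2 : ∑ i : Fin (2 * m + 1), u i * x i ^ 2 = 2 * m := by
    have : ∀ k : ℕ, u k * y k ^ 2 = (if ¬ k = 0 then (1 : ℝ) else 0) := by
      intro k
      simp only [hu, hy]
      split_ifs <;> ring
    simp only [hx]
    rw [Fin.sum_univ_eq_sum_range (fun k => u k * y k ^ 2)]
    rw [Finset.sum_congr rfl (fun k _ => this k)]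
    rw [← Finset.sum_filter, card2, Finset.sum_const, Nat.card_Ico]
    have e1 : 2 * m + 1 - 1 = 2 * m := by omega
    rw [e1]
    ring
  have S3 : ∑ i : Fin (2 * m + 1), w i * x i = -(m : ℝ) := by
    have : ∀ k : ℕ, w k * y k = (if k ≠ 0 ∧ k ≤ m then (-1 : ℝ) else 0) := by
      intro k
      simp only [hw, hy]
      split_ifs
      all_goals try ring
      all_goals exfalso; omega
    simp only [hx]
    rw [Fin.sum_univ_eq_sum_range (fun k => w k * y k)]
    rw [Finset.sum_congr rfl (fun k _ => this k)]
    rw [← Finset.sum_filter, card1, Finset.sum_const, Nat.card_Ico]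
    have e1 : m + 1 - 1 = m := by omega
    rw [e1]
    simp
  have N : x ⬝ᵥ x = 4 * m := by
    have : ∀ k : ℕ, y k * y k = (if k = 0 then s ^ 2 - 1 else 0) + 1 := by
      intro k
      simp only [hy]
      split_ifs <;> ring
    simp only [dotProduct, hx]
    rw [Fin.sum_univ_eq_sum_range (fun k => y k * y k)]
    rw [Finset.sum_congr rfl (fun k _ => this k), Finset.sum_add_distrib]
    rw [Finset.sum_ite_eq' (Finset.range (2 * m + 1)) 0 (fun _ => s ^ 2 - 1)]
    simp only [Finset.mem_range, Nat.lt_add_one_iff, Nat.zero_le, if_true,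
      Finset.sum_const, Finset.card_range, nsmul_eq_mul, mul_one, hs2]
    push_cast
    ring
  -- quadratic form
  have pt : ∀ i j : Fin (2 * m + 1), x i * (A i j * x j) =
      (u i * x i) * (u j * x j) - (if j = i then u i * x i ^ 2 else 0)
      + ((if i = 0 then x 0 * (w j * x j) else 0) + (if j = 0 then x 0 * (w i * x i) else 0)) := by
    intro i j
    have h0 : ∀ a : Fin (2 * m + 1), a = 0 ↔ (a : ℕ) = 0 := by
      intro a; rw [Fin.ext_iff]; simp
    have hji : j = i ↔ (j : ℕ) = (i : ℕ) := Fin.ext_iff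
    simp only [hA, SimpleGraph.adjMatrix_apply, tildeK_adj_iff, h0, hji, hx, hy, hu, hw,
      Fin.val_zero]
    split_ifs
    all_goals try ring
    all_goals exfalso; omega
  have Q : x ⬝ᵥ (A *ᵥ x) = -(2 * m * s) - 2 * m := by
    have expand : x ⬝ᵥ (A *ᵥ x) = ∑ i, ∑ j, x i * (A i j * x j) := by
      simp [dotProduct, Matrix.mulVec, Finset.mul_sum]
    rw [expand, Finset.sum_congr rfl (fun i _ => Finset.sum_congr rfl (fun j _ => pt i j))]
    have e1 : ∑ i : Fin (2*m+1), ∑ j : Fin (2*m+1), (u i * x i) * (u j * x j)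
        = (∑ i : Fin (2*m+1), u i * x i) * (∑ j : Fin (2*m+1), u j * x j) := by
      exact (Finset.sum_mul_sum _ _ _ _).symm
    have e2 : ∀ i : Fin (2*m+1), ∑ j : Fin (2*m+1), (if j = i then u i * x i ^ 2 else 0)
        = u i * x i ^ 2 := by
      intro i; simp
    have e3 : ∀ i : Fin (2*m+1), ∑ j : Fin (2*m+1), (if i = 0 then x 0 * (w j * x j) else 0)
        = if i = 0 then x 0 * ∑ j : Fin (2*m+1), w j * x j else 0 := by
      intro i; split_ifs with h <;> simp [h, Finset.mul_sum]
    have e4 : ∀ i : Fin (2*m+1), ∑ j : Fin (2*m+1), (if j = 0 then x 0 * (w i * x i) else 0)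
        = x 0 * (w i * x i) := by
      intro i; simp
    simp only [Finset.sum_add_distrib, Finset.sum_sub_distrib]
    rw [e1, Finset.sum_congr rfl (fun i _ => e2 i), Finset.sum_congr rfl (fun i _ => e3 i),
      Finset.sum_congr rfl (fun i _ => e4 i)]
    rw [Finset.sum_ite_eq' Finset.univ (0 : Fin (2*m+1)) (fun _ => x 0 * ∑ j : Fin (2*m+1), w j * x j)]
    simp only [Finset.mem_univ, if_true, ← Finset.mul_sum]
    have hx0 : x 0 = s := by simp [hx, hy]
    rw [S1, S2, S3, hx0]
    ring
  have hray := rayleigh_lb hAh x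
  rw [N, Q] at hray
  have hm' : (0 : ℝ) < m := by exact_mod_cast hm
  nlinarith [hray, hm', hs0]

lemma graphMinEig_eq {V : Type*} [Fintype V] [DecidableEq V] (G : SimpleGraph V)
    [inst : DecidableRel G.Adj] : graphMinEig G = sInf (spectrum ℝ (G.adjMatrix ℝ)) := by
  unfold graphMinEig minEigM
  congr!

/-- The smallest adjacency eigenvalue of `K̃_{2m}` tends to `-∞` as `m → ∞`. -/
theorem stmt2 : Tendsto (fun m : ℕ => graphMinEig (tildeK m)) atTop atBot := by
  classical
  have hbound : ∀ᶠ m : ℕ in atTop, graphMinEig (tildeK m) ≤ -(Real.sqrt (2 * m) + 1) / 2 := by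
    filter_upwards [eventually_ge_atTop 1] with m hm
    rw [graphMinEig_eq (tildeK m)]
    exact tildeK_bound m hm
  have htend : Tendsto (fun m : ℕ => -(Real.sqrt (2 * m) + 1) / 2) atTop atBot := by
    have h1 : Tendsto (fun m : ℕ => (2 * m : ℝ)) atTop atTop :=
      Tendsto.const_mul_atTop (by norm_num) tendsto_natCast_atTop_atTop
    have h2 : Tendsto (fun m : ℕ => Real.sqrt (2 * m)) atTop atTop := by
      rw [tendsto_atTop_atTop]
      intro b
      rcases le_or_gt b 0 with hb | hb
      · exact ⟨0, fun a _ => hb.trans (Real.sqrt_nonneg _)⟩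
      · refine ⟨⌈b ^ 2⌉₊, fun a ha => ?_⟩
        have h1' : b ^ 2 ≤ (a : ℝ) := (Nat.le_ceil _).trans (Nat.cast_le.2 ha)
        have h2' : b ^ 2 ≤ 2 * (a : ℝ) := by nlinarith [sq_nonneg b]
        calc b = Real.sqrt (b ^ 2) := (Real.sqrt_sq hb.le).symm
        _ ≤ Real.sqrt (2 * a) := Real.sqrt_le_sqrt h2'
    have h3 : Tendsto (fun m : ℕ => Real.sqrt (2 * m) + 1) atTop atTop :=
      h2.atTop_add tendsto_const_nhds
    have h4 : Tendsto (fun m : ℕ => -(Real.sqrt (2 * m) + 1)) atTop atBot :=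
      tendsto_neg_atTop_atBot.comp h3
    exact (tendsto_div_const_atBot_of_pos (by norm_num : (0:ℝ) < 2)).2 h4
  exact tendsto_atBot_mono' _ hbound htend
end

section
/- Let h = (H, ℓ) be a Hoffman graph and let h' be an induced Hoffman subgraph of h. Then the smallest eigenvalue of h' is at least the smallest eigenvalue of h. -/
open Matrix Filter

/-- A Hoffman graph: a graph with vertices labelled fat/slim such that fat vertices are
pairwise non-adjacent and every fat vertex has a slim neighbor. -/
structure HoffmanGraph (V : Type*) where
  G : SimpleGraph V
  isFat : V → Bool
  fat_not_adj : ∀ u v, isFat u → isFat v → ¬ G.Adj u v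
  fat_has_slim : ∀ u, isFat u → ∃ v, isFat v = false ∧ G.Adj u v

/-- The special matrix `S(h) = A_s - C Cᵀ` of a Hoffman graph, indexed by slim vertices. -/
noncomputable def HoffmanGraph.specialMatrix {V : Type*} [Fintype V] [DecidableEq V]
    (h : HoffmanGraph V) :
    Matrix {v // h.isFat v = false} {v // h.isFat v = false} ℝ := by
  classical
  exact fun a b => (h.G.adjMatrix ℝ) a.1 b.1 -
    ∑ f : {v // h.isFat v = true}, (h.G.adjMatrix ℝ) a.1 f.1 * (h.G.adjMatrix ℝ) b.1 f.1

/-- The smallest eigenvalue of a Hoffman graph: the smallest eigenvalue of its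
special matrix. -/
noncomputable def HoffmanGraph.minEig {V : Type*} [Fintype V] [DecidableEq V]
    (h : HoffmanGraph V) : ℝ :=
  minEigM h.specialMatrix

section AuxLemmas

variable {n : Type*} [Fintype n] [DecidableEq n]

lemma spectrum_empty_of_isEmpty [IsEmpty n] (M : Matrix n n ℝ) : spectrum ℝ M = ∅ := by
  haveI : Subsingleton (Matrix n n ℝ) := ⟨fun a b => by ext i; exact isEmptyElim i⟩
  ext μ
  simp [spectrum.mem_iff, isUnit_of_subsingleton]

lemma mem_spectrum_sub_smul_one (M : Matrix n n ℝ) (c μ : ℝ) :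
    μ ∈ spectrum ℝ (M - c • 1) ↔ μ + c ∈ spectrum ℝ M := by
  simp only [spectrum.mem_iff, Algebra.algebraMap_eq_smul_one]
  have h : μ • (1 : Matrix n n ℝ) - (M - c • 1) = (μ + c) • 1 - M := by
    rw [add_smul]; abel
  rw [h]

/-- Extension of a vector by zero along a map. -/
noncomputable def extendZero {α : Type*} [Fintype α] (ι : α → n) (x : α → ℝ) : n → ℝ :=
  fun v => ∑ a, if ι a = v then x a else 0

lemma sum_reindex {α : Type*} [Fintype α] (ι : α → n) (x : α → ℝ) (g : n → ℝ) :
    ∑ v, extendZero ι x v * g v = ∑ a, x a * g (ι a) := by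
  unfold extendZero
  simp_rw [Finset.sum_mul]
  rw [Finset.sum_comm]
  simp [ite_mul]

omit [Fintype n] in
lemma extendZero_apply_inj {α : Type*} [Fintype α] {ι : α → n} (hι : Function.Injective ι)
    (x : α → ℝ) (a : α) : extendZero ι x (ι a) = x a := by
  unfold extendZero
  rw [Fintype.sum_eq_single a (fun b hb => if_neg (fun h => hb (hι h))), if_pos rfl]

lemma quad_sub_smul (M : Matrix n n ℝ) (c : ℝ) (x : n → ℝ) :
    x ⬝ᵥ (M - c • 1) *ᵥ x = x ⬝ᵥ M *ᵥ x - c * (x ⬝ᵥ x) := by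
  simp [sub_mulVec, dotProduct_sub, smul_mulVec, one_mulVec, dotProduct_smul,
    smul_eq_mul]

omit [Fintype n] in
lemma isHermitian_sub_smul_one {M : Matrix n n ℝ} (hM : M.IsHermitian) (c : ℝ) :
    (M - c • 1).IsHermitian := by
  have h1 : ((c : ℝ) • (1 : Matrix n n ℝ)).IsHermitian := by
    simp [Matrix.IsHermitian, conjTranspose_smul]
  exact hM.sub h1

lemma psd_sub_minEig [Nonempty n] {M : Matrix n n ℝ} (hM : M.IsHermitian) :
    (M - minEigM M • 1).PosSemidef := by
  have hbdd : BddBelow (spectrum ℝ M) := by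
    rw [hM.spectrum_real_eq_range_eigenvalues]; exact (Set.finite_range _).bddBelow
  have herm : (M - minEigM M • 1).IsHermitian := isHermitian_sub_smul_one hM _
  refine herm.posSemidef_iff_eigenvalues_nonneg.mpr fun i => show (0:ℝ) ≤ _ from ?_
  have hmem := herm.eigenvalues_mem_spectrum_real i
  rw [mem_spectrum_sub_smul_one] at hmem
  have := csInf_le hbdd hmem
  unfold minEigM at *
  linarith

lemma spectrum_nonneg_of_psd {P : Matrix n n ℝ} (hP : P.PosSemidef) {μ : ℝ}
    (hμ : μ ∈ spectrum ℝ P) : 0 ≤ μ := by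
  rw [hP.1.spectrum_real_eq_range_eigenvalues] at hμ
  obtain ⟨i, rfl⟩ := hμ
  exact hP.eigenvalues_nonneg i

end AuxLemmas

open scoped Classical in
lemma quad_special {V : Type*} [Fintype V] [DecidableEq V] (h : HoffmanGraph V)
    (x : {v // h.isFat v = false} → ℝ) :
    x ⬝ᵥ h.specialMatrix *ᵥ x =
      (∑ a, x a * ∑ b, x b * (h.G.adjMatrix ℝ) a.1 b.1)
        - ∑ g : {v // h.isFat v = true}, (∑ a, x a * (h.G.adjMatrix ℝ) a.1 g.1) ^ 2 := by
  unfold mulVec HoffmanGraph.specialMatrix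
  unfold dotProduct
  dsimp only
  simp only [sub_mul, mul_sub, Finset.sum_sub_distrib, Finset.sum_mul, Finset.mul_sum]
  congr 1
  · exact Finset.sum_congr rfl fun a _ => Finset.sum_congr rfl fun b _ => by ring
  · simp_rw [sq, Finset.sum_mul_sum]
    conv_rhs => rw [Finset.sum_comm]
    refine Finset.sum_congr rfl fun a _ => ?_
    rw [Finset.sum_comm]
    exact Finset.sum_congr rfl fun b _ => Finset.sum_congr rfl fun g _ => by ring

open scoped Classical in
lemma specialMatrix_isHermitian {V : Type*} [Fintype V] [DecidableEq V] (h : HoffmanGraph V) :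
    h.specialMatrix.IsHermitian := by
  have hadjA : ∀ u v : V, (h.G.adjMatrix ℝ) u v = (h.G.adjMatrix ℝ) v u := fun u v => by
    simp only [SimpleGraph.adjMatrix_apply]
    exact if_congr (h.G.adj_comm u v) rfl rfl
  show _ᴴ = _
  ext a b
  rw [conjTranspose_apply, star_trivial]
  show h.specialMatrix b a = h.specialMatrix a b
  unfold HoffmanGraph.specialMatrix
  rw [hadjA b.1 a.1]
  congr 1
  exact Finset.sum_congr rfl fun g _ => mul_comm _ _

/-- The smallest eigenvalue of an induced Hoffman subgraph is at least the smallest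
eigenvalue of the ambient Hoffman graph. -/
theorem stmt5 {V V' : Type*} [Fintype V] [DecidableEq V] [Fintype V'] [DecidableEq V']
    (h : HoffmanGraph V) (h' : HoffmanGraph V') (f : V' ↪ V)
    (hadj : ∀ a b, h'.G.Adj a b ↔ h.G.Adj (f a) (f b))
    (hfat : ∀ a, h'.isFat a = h.isFat (f a)) :
    h.minEig ≤ h'.minEig := by
  classical
  -- the inclusion of slim vertices
  let ι : {v // h'.isFat v = false} → {v // h.isFat v = false} :=
    fun a => ⟨f a.1, (hfat a.1).symm.trans a.2⟩
  have hι : Function.Injective ι := fun a b hab =>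
    Subtype.ext (f.injective (congrArg Subtype.val hab))
  -- the inclusion of fat vertices
  let κ : {v // h'.isFat v = true} → {v // h.isFat v = true} :=
    fun g => ⟨f g.1, (hfat g.1).symm.trans g.2⟩
  have hκ : Function.Injective κ := fun a b hab =>
    Subtype.ext (f.injective (congrArg Subtype.val hab))
  have hAA : ∀ (a b : V'), (h'.G.adjMatrix ℝ) a b = (h.G.adjMatrix ℝ) (f a) (f b) := fun a b => by
    simp only [SimpleGraph.adjMatrix_apply]
    exact if_congr (hadj a b) rfl rfl
  by_cases hne : Nonempty {v // h.isFat v = false}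
  case neg =>
    haveI : IsEmpty {v // h.isFat v = false} := not_nonempty_iff.mp hne
    haveI : IsEmpty {v // h'.isFat v = false} := ⟨fun a => IsEmpty.false (ι a)⟩
    unfold HoffmanGraph.minEig minEigM
    rw [spectrum_empty_of_isEmpty, spectrum_empty_of_isEmpty]
  case pos =>
  haveI := hne
  have hSh : h.specialMatrix.IsHermitian := specialMatrix_isHermitian h
  have hS'h : h'.specialMatrix.IsHermitian := specialMatrix_isHermitian h'
  set c := minEigM h.specialMatrix with hc
  have hPSD : (h.specialMatrix - c • 1).PosSemidef := psd_sub_minEig hSh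
  -- the key quadratic-form estimate
  have key : ∀ x : {v // h'.isFat v = false} → ℝ,
      c * (x ⬝ᵥ x) ≤ x ⬝ᵥ h'.specialMatrix *ᵥ x := by
    intro x
    have h0 := hPSD.dotProduct_mulVec_nonneg (extendZero ι x)
    rw [star_trivial, quad_sub_smul] at h0
    have hyy : extendZero ι x ⬝ᵥ extendZero ι x = x ⬝ᵥ x := by
      show ∑ v, extendZero ι x v * extendZero ι x v = ∑ a, x a * x a
      rw [sum_reindex ι x (extendZero ι x)]
      exact Finset.sum_congr rfl fun a _ => by rw [extendZero_apply_inj hι]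
    have hSy : extendZero ι x ⬝ᵥ h.specialMatrix *ᵥ extendZero ι x ≤
        x ⬝ᵥ h'.specialMatrix *ᵥ x := by
      rw [quad_special h, quad_special h']
      simp only [sum_reindex]
      have hterm1 : (∑ a, x a * ∑ b, x b * (h.G.adjMatrix ℝ) (ι a).1 (ι b).1)
          = ∑ a, x a * ∑ b, x b * (h'.G.adjMatrix ℝ) a.1 b.1 := by
        refine Finset.sum_congr rfl fun a _ => ?_
        congr 1
        refine Finset.sum_congr rfl fun b _ => ?_
        congr 1
        exact (hAA a.1 b.1).symm
      rw [hterm1]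
      apply sub_le_sub_left
      -- the fat sums
      have hfatsum : (∑ g' : {v // h'.isFat v = true},
            (∑ a, x a * (h'.G.adjMatrix ℝ) a.1 g'.1) ^ 2)
          = ∑ g' : {v // h'.isFat v = true},
            (∑ a, x a * (h.G.adjMatrix ℝ) (ι a).1 (κ g').1) ^ 2 := by
        refine Finset.sum_congr rfl fun g' _ => ?_
        congr 1
        exact Finset.sum_congr rfl fun a _ => by rw [hAA a.1 g'.1]
      rw [hfatsum]
      have himg : (∑ g' : {v // h'.isFat v = true},
            (∑ a, x a * (h.G.adjMatrix ℝ) (ι a).1 (κ g').1) ^ 2)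
          = ∑ g ∈ Finset.univ.image κ,
            (∑ a, x a * (h.G.adjMatrix ℝ) (ι a).1 g.1) ^ 2 := by
        rw [Finset.sum_image (fun a _ b _ hab => hκ hab)]
      rw [himg]
      exact Finset.sum_le_sum_of_subset_of_nonneg (Finset.subset_univ _)
        (fun _ _ _ => sq_nonneg _)
    calc c * (x ⬝ᵥ x) = c * (extendZero ι x ⬝ᵥ extendZero ι x) := by rw [hyy]
      _ ≤ extendZero ι x ⬝ᵥ h.specialMatrix *ᵥ extendZero ι x := by linarith
      _ ≤ x ⬝ᵥ h'.specialMatrix *ᵥ x := hSy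
  by_cases hne' : Nonempty {v // h'.isFat v = false}
  · haveI := hne'
    have hPSD' : (h'.specialMatrix - c • 1).PosSemidef := by
      refine PosSemidef.of_dotProduct_mulVec_nonneg (isHermitian_sub_smul_one hS'h c) fun x => ?_
      rw [star_trivial, quad_sub_smul]
      have := key x
      linarith
    have hspec' : (spectrum ℝ h'.specialMatrix).Nonempty := by
      rw [hS'h.spectrum_real_eq_range_eigenvalues]
      exact ⟨_, ⟨Classical.arbitrary _, rfl⟩⟩
    show c ≤ sInf (spectrum ℝ h'.specialMatrix)
    refine le_csInf hspec' fun μ hμ => ?_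
    have hmem : μ - c ∈ spectrum ℝ (h'.specialMatrix - c • 1) := by
      rw [mem_spectrum_sub_smul_one, sub_add_cancel]
      exact hμ
    have h0 := spectrum_nonneg_of_psd hPSD' hmem
    linarith
  · haveI : IsEmpty {v // h'.isFat v = false} := not_nonempty_iff.mp hne'
    have hz : h'.minEig = 0 := by
      unfold HoffmanGraph.minEig minEigM
      rw [spectrum_empty_of_isEmpty]
      exact Real.sInf_empty
    rw [hz]
    show c ≤ 0
    obtain ⟨a⟩ := hne
    set e : {v // h.isFat v = false} → ℝ := fun v => if v = a then (1:ℝ) else 0 with he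
    have h0 := hPSD.dotProduct_mulVec_nonneg e
    rw [star_trivial, quad_sub_smul] at h0
    have hee : e ⬝ᵥ e = 1 := by
      show (∑ v, e v * e v) = 1
      rw [he]
      rw [Fintype.sum_eq_single a (fun b hb => by simp [if_neg hb])]
      simp
    have hMaa : e ⬝ᵥ h.specialMatrix *ᵥ e = h.specialMatrix a a := by
      show (∑ u, e u * ∑ v, h.specialMatrix u v * e v) = _
      rw [he]
      rw [Fintype.sum_eq_single a (fun b hb => by simp [if_neg hb])]
      rw [Fintype.sum_eq_single a (fun b hb => by simp [if_neg hb])]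
      simp
    have hSaa : h.specialMatrix a a ≤ 0 := by
      show (h.G.adjMatrix ℝ) a.1 a.1 -
        (∑ g : {v // h.isFat v = true},
          (h.G.adjMatrix ℝ) a.1 g.1 * (h.G.adjMatrix ℝ) a.1 g.1) ≤ 0
      have hdiag : (h.G.adjMatrix ℝ) a.1 a.1 = 0 := by simp
      rw [hdiag, zero_sub, neg_nonpos]
      exact Finset.sum_nonneg fun g _ => mul_self_nonneg _
    rw [hee, hMaa, mul_one] at h0
    linarith
end

section
/- Let h be a Hoffman graph and p a positive integer. Let G(h, p) be the graph obtained from h by replacing every fat vertex by a clique K_p of p new (slim) vertices, each vertex of which is joined to all neighbors of the corresponding fat vertex. Then λ_min(G(h, p)) ≥ λ_min(h), and λ_min(G(h, p)) → λ_min(h) as p → ∞. -/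
open Matrix Filter

/-- `G(h,p)`: replace every fat vertex of the Hoffman graph `h` by a clique `K_p`,
each of whose vertices is joined to all neighbors of the corresponding fat vertex. -/
def HoffmanGraph.replace {V : Type*} (h : HoffmanGraph V) (p : ℕ) :
    SimpleGraph ({v // h.isFat v = false} ⊕ ({v // h.isFat v = true} × Fin p)) where
  Adj x y :=
    match x, y with
    | Sum.inl a, Sum.inl b => h.G.Adj a.1 b.1
    | Sum.inl a, Sum.inr (f, _) => h.G.Adj a.1 f.1
    | Sum.inr (f, _), Sum.inl a => h.G.Adj a.1 f.1
    | Sum.inr (f, i), Sum.inr (g, j) => f = g ∧ i ≠ j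
  symm := ⟨by
    rintro (a | ⟨f, i⟩) (b | ⟨g, j⟩) hadj
    · exact hadj.symm
    · exact hadj
    · exact hadj
    · exact ⟨hadj.1.symm, hadj.2.symm⟩⟩
  loopless := ⟨by
    rintro (a | ⟨f, i⟩) hadj
    · exact h.G.irrefl hadj
    · exact hadj.2 rfl⟩



section extraAux
section aux
variable {n : Type*} [Fintype n] [DecidableEq n] {A : Matrix n n ℝ}

theorem mem_spec_iff {μ : ℝ} :
    μ ∈ spectrum ℝ A ↔ ∃ v, v ≠ 0 ∧ A *ᵥ v = μ • v := by
  rw [spectrum.mem_iff, Matrix.isUnit_iff_isUnit_det, isUnit_iff_ne_zero, not_ne_iff,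
    ← Matrix.exists_mulVec_eq_zero_iff]
  have halg : ∀ v : n → ℝ, (algebraMap ℝ (Matrix n n ℝ) μ) *ᵥ v = μ • v := by
    intro v; ext i; simp [Matrix.algebraMap_eq_diagonal, Matrix.mulVec_diagonal]
  constructor
  · rintro ⟨v, hv, h0⟩
    rw [Matrix.sub_mulVec, halg, sub_eq_zero] at h0
    exact ⟨v, hv, h0.symm⟩
  · rintro ⟨v, hv, h0⟩
    exact ⟨v, hv, by rw [Matrix.sub_mulVec, halg, h0, sub_self]⟩

theorem minEigM_le_eig (hA : A.IsHermitian) (i : n) : minEigM A ≤ hA.eigenvalues i :=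
  csInf_le (Matrix.finite_real_spectrum.bddBelow) (hA.eigenvalues_mem_spectrum_real i)

theorem rayleigh_ge (hA : A.IsHermitian) (x : n → ℝ) :
    minEigM A * (x ⬝ᵥ x) ≤ x ⬝ᵥ (A *ᵥ x) := by
  set U : Matrix n n ℝ := (hA.eigenvectorUnitary : Matrix n n ℝ) with hU
  have hUU : U * star U = 1 := (Matrix.mem_unitaryGroup_iff).mp hA.eigenvectorUnitary.2
  have hstar : star U = Uᵀ := by
    rw [Matrix.star_eq_conjTranspose]; ext i j; simp [Matrix.conjTranspose_apply]
  set w : n → ℝ := Uᵀ *ᵥ x with hw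
  have hvm : Uᵀ *ᵥ x = x ᵥ* U := Matrix.mulVec_transpose U x
  have hxx : x ⬝ᵥ x = w ⬝ᵥ w := by
    have h1 : x ⬝ᵥ ((U * Uᵀ) *ᵥ x) = w ⬝ᵥ w := by
      rw [← Matrix.mulVec_mulVec, Matrix.dotProduct_mulVec, hw, hvm]
    rw [← h1, ← hstar, hUU, Matrix.one_mulVec]
  have hdiag : (Matrix.diagonal (RCLike.ofReal ∘ hA.eigenvalues) : Matrix n n ℝ)
      = Matrix.diagonal hA.eigenvalues := by
    ext i j; simp [Matrix.diagonal]
  have hAx : x ⬝ᵥ (A *ᵥ x) = ∑ i, hA.eigenvalues i * (w i)^2 := by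
    conv_lhs => rw [hA.spectral_theorem, Unitary.conjStarAlgAut_apply]
    rw [hstar, hdiag, ← Matrix.mulVec_mulVec, ← Matrix.mulVec_mulVec,
      Matrix.dotProduct_mulVec, ← hU, ← hvm, ← hw]
    simp only [dotProduct, Matrix.mulVec_diagonal]
    exact Finset.sum_congr rfl fun i _ => by ring
  rw [hAx, hxx]
  calc minEigM A * (w ⬝ᵥ w) = ∑ i, minEigM A * (w i)^2 := by
        simp only [dotProduct, Finset.mul_sum]; exact Finset.sum_congr rfl fun i _ => by ring
    _ ≤ ∑ i, hA.eigenvalues i * (w i)^2 :=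
        Finset.sum_le_sum fun i _ => mul_le_mul_of_nonneg_right (minEigM_le_eig hA i) (sq_nonneg _)

theorem le_minEigM [Nonempty n] (hA : A.IsHermitian) {μ : ℝ}
    (hb : ∀ x : n → ℝ, μ * (x ⬝ᵥ x) ≤ x ⬝ᵥ (A *ᵥ x)) : μ ≤ minEigM A := by
  apply le_csInf
  · exact ⟨hA.eigenvalues (Classical.arbitrary n), hA.eigenvalues_mem_spectrum_real _⟩
  · intro a ha
    obtain ⟨v, hv, hAv⟩ := mem_spec_iff.mp ha
    have h1 := hb v
    rw [hAv] at h1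
    have hvv : 0 < v ⬝ᵥ v := by
      have h2 : v ⬝ᵥ v ≠ 0 := fun hc => hv (dotProduct_self_eq_zero.mp hc)
      have h3 : 0 ≤ v ⬝ᵥ v := Finset.sum_nonneg fun i _ => mul_self_nonneg _
      exact lt_of_le_of_ne h3 (Ne.symm h2)
    have h4 : v ⬝ᵥ (a • v) = a * (v ⬝ᵥ v) := by
      simp [dotProduct_smul, smul_eq_mul]
    rw [h4] at h1
    exact le_of_mul_le_mul_right h1 hvv

theorem minEigM_spec_mem [Nonempty n] (hA : A.IsHermitian) : minEigM A ∈ spectrum ℝ A :=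
  Set.Nonempty.csInf_mem
    ⟨hA.eigenvalues (Classical.arbitrary n), hA.eigenvalues_mem_spectrum_real _⟩
    Matrix.finite_real_spectrum

theorem minEigM_empty [IsEmpty n] (A : Matrix n n ℝ) : minEigM A = 0 := by
  have : spectrum ℝ A = ∅ := by
    ext μ
    simp only [Set.mem_empty_iff_false, iff_false, spectrum.mem_iff, not_not]
    have h1 : (algebraMap ℝ (Matrix n n ℝ)) μ - A = 1 := Subsingleton.elim _ _
    rw [h1]; exact isUnit_one
  rw [minEigM, this, Real.sInf_empty]

end aux

lemma sum_alg {S F I : Type*} [Fintype S] [Fintype F] [Fintype I] [DecidableEq F] [DecidableEq I]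
    (x : S → ℝ) (y : F → I → ℝ) (e : S → S → ℝ) (d : S → F → ℝ) (k : F → I → F → I → ℝ)
    (hk0 : ∀ f i g j, f ≠ g → k f i g j = 0)
    (hk1 : ∀ f i, k f i f i = 0)
    (hk2 : ∀ f i j, i ≠ j → k f i f j = 1) :
    (∑ a, x a * (∑ b, e a b * x b + ∑ f, ∑ i, d a f * y f i))
      + ∑ f, ∑ i, y f i * (∑ a, d a f * x a + ∑ g, ∑ j, k f i g j * y g j)
    = (∑ a, x a * ∑ b, (e a b - ∑ f, d a f * d b f) * x b)
      + ∑ f, ((∑ a, d a f * x a) + ∑ i, y f i)^2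
      - ∑ f, ∑ i, (y f i)^2 := by
  set c : F → ℝ := fun f => ∑ a, d a f * x a with hc
  set s : F → ℝ := fun f => ∑ i, y f i with hs
  have hclique : ∀ (f : F) (i : I), (∑ g, ∑ j, k f i g j * y g j) = s f - y f i := by
    intro f i
    rw [Finset.sum_eq_single f]
    · have h1 : ∀ j ∈ Finset.univ, k f i f j * y f j
          = y f j - (if i = j then y f j else 0) := by
        intro j _
        by_cases hj : i = j
        · subst hj; rw [hk1]; simp
        · rw [hk2 _ _ _ hj]; simp [hj]
      rw [Finset.sum_congr rfl h1, Finset.sum_sub_distrib, Finset.sum_ite_eq]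
      simp [hs]
    · intro g _ hg
      apply Finset.sum_eq_zero; intro j _
      rw [hk0 _ _ _ _ (Ne.symm hg), zero_mul]
    · intro habs; exact absurd (Finset.mem_univ f) habs
  have hmix : ∀ a : S, (∑ f, ∑ i, d a f * y f i) = ∑ f, d a f * s f := by
    intro a; exact Finset.sum_congr rfl fun f _ => by rw [hs, Finset.mul_sum]
  have hswap : (∑ a, x a * ∑ f, d a f * s f) = ∑ f, c f * s f := by
    calc (∑ a, x a * ∑ f, d a f * s f) = ∑ a, ∑ f, x a * (d a f * s f) := by
          exact Finset.sum_congr rfl fun a _ => by rw [Finset.mul_sum]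
      _ = ∑ f, ∑ a, x a * (d a f * s f) := Finset.sum_comm
      _ = ∑ f, c f * s f := by
          refine Finset.sum_congr rfl fun f _ => ?_
          rw [hc]; rw [Finset.sum_mul]
          exact Finset.sum_congr rfl fun a _ => by ring
  have hCC : (∑ a, x a * ∑ b, (∑ f, d a f * d b f) * x b) = ∑ f, c f ^ 2 := by
    calc (∑ a, x a * ∑ b, (∑ f, d a f * d b f) * x b)
        = ∑ a, ∑ b, ∑ f, (d a f * x a) * (d b f * x b) := by
          refine Finset.sum_congr rfl fun a _ => ?_
          rw [Finset.mul_sum]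
          refine Finset.sum_congr rfl fun b _ => ?_
          rw [Finset.sum_mul, Finset.mul_sum]
          exact Finset.sum_congr rfl fun f _ => by ring
      _ = ∑ a, ∑ f, ∑ b, (d a f * x a) * (d b f * x b) :=
          Finset.sum_congr rfl fun a _ => Finset.sum_comm
      _ = ∑ f, ∑ a, ∑ b, (d a f * x a) * (d b f * x b) := Finset.sum_comm
      _ = ∑ f, c f ^ 2 := by
          refine Finset.sum_congr rfl fun f _ => ?_
          rw [hc, sq, Finset.sum_mul_sum]
  have e1 : (∑ a, x a * (∑ b, e a b * x b + ∑ f, ∑ i, d a f * y f i))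
      = (∑ a, x a * ∑ b, e a b * x b) + ∑ f, c f * s f := by
    rw [← hswap, ← Finset.sum_add_distrib]
    exact Finset.sum_congr rfl fun a _ => by rw [hmix a, mul_add]
  have e2 : (∑ f, ∑ i, y f i * (c f + ∑ g, ∑ j, k f i g j * y g j))
      = ∑ f, (c f * s f + s f * s f) - ∑ f, ∑ i, (y f i)^2 := by
    rw [← Finset.sum_sub_distrib]
    refine Finset.sum_congr rfl fun f _ => ?_
    have h1 : ∀ i ∈ Finset.univ, y f i * (c f + ∑ g, ∑ j, k f i g j * y g j)
        = y f i * (c f + s f) - y f i^2 := by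
      intro i _; rw [hclique f i]; ring
    rw [Finset.sum_congr rfl h1, Finset.sum_sub_distrib, ← Finset.sum_mul]
    have h2 : (∑ i, y f i) = s f := rfl
    rw [h2]; ring
  have e3 : (∑ a, x a * ∑ b, (e a b - ∑ f, d a f * d b f) * x b)
      = (∑ a, x a * ∑ b, e a b * x b) - ∑ f, c f^2 := by
    rw [← hCC, ← Finset.sum_sub_distrib]
    refine Finset.sum_congr rfl fun a _ => ?_
    rw [← mul_sub]
    congr 1
    rw [← Finset.sum_sub_distrib]
    exact Finset.sum_congr rfl fun b _ => by rw [sub_mul]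
  have e4 : ∑ f, (c f + s f)^2
      = ∑ f, c f^2 + (∑ f, c f * s f + ∑ f, (c f * s f + s f * s f)) := by
    rw [← Finset.sum_add_distrib, ← Finset.sum_add_distrib]
    exact Finset.sum_congr rfl fun f _ => by ring
  rw [e1, e2, e3]
  linarith [e4]

variable {V : Type*} [Fintype V] [DecidableEq V] (h : HoffmanGraph V)

theorem quad_id (p : ℕ) [DecidableRel h.G.Adj] [inst : DecidableRel (h.replace p).Adj]
    (z : ({v // h.isFat v = false} ⊕ ({v // h.isFat v = true} × Fin p)) → ℝ) :
    z ⬝ᵥ (((h.replace p).adjMatrix ℝ) *ᵥ z)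
      = (fun a => z (Sum.inl a)) ⬝ᵥ (h.specialMatrix *ᵥ (fun a => z (Sum.inl a)))
        + ∑ f : {v // h.isFat v = true},
            ((∑ a : {v // h.isFat v = false},
                (if h.G.Adj a.1 f.1 then (1:ℝ) else 0) * z (Sum.inl a))
              + ∑ i : Fin p, z (Sum.inr (f, i)))^2
        - ∑ f : {v // h.isFat v = true}, ∑ i : Fin p, (z (Sum.inr (f, i)))^2 := by
  let S := {v // h.isFat v = false}
  let F := {v // h.isFat v = true}
  let e : S → S → ℝ := fun a b => if h.G.Adj a.1 b.1 then 1 else 0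
  let d : S → F → ℝ := fun a f => if h.G.Adj a.1 f.1 then 1 else 0
  let k : F → Fin p → F → Fin p → ℝ := fun f i g j => if f = g ∧ i ≠ j then 1 else 0
  have hM : ((h.replace p).adjMatrix ℝ)
      = Matrix.fromBlocks (Matrix.of e) (Matrix.of fun a q => d a q.1)
          (Matrix.of fun q a => d a q.1) (Matrix.of fun q r => k q.1 q.2 r.1 r.2) := by
    ext u w
    rcases u with a | ⟨f, i⟩ <;> rcases w with b | ⟨g, j⟩ <;> rw [SimpleGraph.adjMatrix_apply] <;>
      simp [HoffmanGraph.replace, SimpleGraph.adjMatrix_apply, e, d, k] <;> congr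
  have hS : h.specialMatrix = Matrix.of (fun a b => e a b - ∑ f : F, d a f * d b f) := by
    ext a b
    simp only [HoffmanGraph.specialMatrix, SimpleGraph.adjMatrix_apply, Matrix.of_apply]
    congr 1
    · by_cases hab : h.G.Adj a.1 b.1 <;> simp [e, hab]
    · refine Finset.sum_congr rfl fun f _ => ?_
      by_cases h1 : h.G.Adj a.1 f.1 <;> by_cases h2 : h.G.Adj b.1 f.1 <;> simp [d, h1, h2]
  rw [hM, hS]
  simp only [dotProduct, Matrix.mulVec, dotProduct, Fintype.sum_sum_type,
    Fintype.sum_prod_type, Matrix.fromBlocks_apply₁₁, Matrix.fromBlocks_apply₁₂,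
    Matrix.fromBlocks_apply₂₁, Matrix.fromBlocks_apply₂₂, Matrix.of_apply]
  exact sum_alg (fun a => z (Sum.inl a)) (fun f i => z (Sum.inr (f, i))) e d k
    (fun f i g j hfg => by simp [k, hfg])
    (fun f i => by simp [k])
    (fun f i j hij => by simp [k, hij])

theorem specialMatrix_isHermitian_s6 : h.specialMatrix.IsHermitian := by
  classical
  ext a b
  simp only [Matrix.conjTranspose_apply, HoffmanGraph.specialMatrix, star_trivial,
    SimpleGraph.adjMatrix_apply]
  have hsum : ∀ (u w : V), (∑ f : {v // h.isFat v = true},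
      (if h.G.Adj u f.1 then (1:ℝ) else 0) * if h.G.Adj w f.1 then (1:ℝ) else 0)
      = ∑ f : {v // h.isFat v = true},
      (if h.G.Adj w f.1 then (1:ℝ) else 0) * if h.G.Adj u f.1 then (1:ℝ) else 0 :=
    fun u w => Finset.sum_congr rfl fun f _ => mul_comm _ _
  by_cases hab : h.G.Adj a.1 b.1
  · rw [if_pos hab, if_pos hab.symm, hsum]
  · rw [if_neg hab, if_neg (fun hc => hab hc.symm), hsum]

theorem adjMatrix_isHermitian {W : Type*} [Fintype W] [DecidableEq W] (G : SimpleGraph W)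
    [DecidableRel G.Adj] : (G.adjMatrix ℝ).IsHermitian := by
  ext a b
  simp only [Matrix.conjTranspose_apply, star_trivial, SimpleGraph.adjMatrix_apply]
  by_cases hab : G.Adj a b
  · rw [if_pos hab.symm, if_pos hab]
  · rw [if_neg (fun hc : G.Adj b a => hab hc.symm), if_neg hab]
end extraAux

/-- `λ_min(G(h,p)) ≥ λ_min(h)` for every positive integer `p`, and
`λ_min(G(h,p)) → λ_min(h)` as `p → ∞`. -/
theorem stmt6 {V : Type*} [Fintype V] [DecidableEq V] (h : HoffmanGraph V) :
    (∀ p : ℕ, 0 < p → h.minEig ≤ graphMinEig (h.replace p)) ∧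
      Filter.Tendsto (fun p : ℕ => graphMinEig (h.replace p)) Filter.atTop (nhds h.minEig) := by
  classical
  have hgd : ∀ p : ℕ, graphMinEig (h.replace p) = minEigM ((h.replace p).adjMatrix ℝ) :=
    fun p => rfl
  by_cases hS : Nonempty {v // h.isFat v = false}
  case neg =>
    haveI hSE : IsEmpty {v // h.isFat v = false} := not_nonempty_iff.mp hS
    haveI hFE : IsEmpty {v // h.isFat v = true} := ⟨fun f => by
      obtain ⟨v, hv, _⟩ := h.fat_has_slim f.1 f.2
      exact hSE.false ⟨v, hv⟩⟩
    have h0 : h.minEig = 0 := minEigM_empty _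
    have hg : ∀ p : ℕ, graphMinEig (h.replace p) = 0 := fun p => by
      rw [hgd p]; exact minEigM_empty _
    rw [h0]
    exact ⟨fun p _ => le_of_eq (by rw [hg p]), by simp only [hg]; exact tendsto_const_nhds⟩
  case pos =>
  haveI := hS
  have hSm := specialMatrix_isHermitian_s6 h
  set μ := h.minEig with hμdef
  have hAh : ∀ p : ℕ, (((h.replace p).adjMatrix ℝ)).IsHermitian :=
    fun p => adjMatrix_isHermitian _
  have hzz : ∀ (p : ℕ) (z : ({v // h.isFat v = false} ⊕ ({v // h.isFat v = true} × Fin p)) → ℝ),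
      z ⬝ᵥ z = (fun a => z (Sum.inl a)) ⬝ᵥ (fun a => z (Sum.inl a))
        + ∑ f : {v // h.isFat v = true}, ∑ i : Fin p, (z (Sum.inr (f, i)))^2 := by
    intro p z
    simp only [dotProduct, Fintype.sum_sum_type, Fintype.sum_prod_type]
    congr 1
    exact Finset.sum_congr rfl fun f _ => Finset.sum_congr rfl fun i _ => (sq _).symm
  have hμ1 : Nonempty {v // h.isFat v = true} → μ ≤ -1 := by
    rintro ⟨f⟩
    obtain ⟨v, hv, hadj⟩ := h.fat_has_slim f.1 f.2
    set a : {v // h.isFat v = false} := ⟨v, hv⟩ with ha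
    have h1 := rayleigh_ge hSm (Pi.single a 1)
    have h2 : (Pi.single a 1 : _ → ℝ) ⬝ᵥ Pi.single a 1 = 1 := by
      simp [dotProduct, Pi.single_apply]
    have h3 : (Pi.single a (1:ℝ)) ⬝ᵥ (h.specialMatrix *ᵥ Pi.single a 1)
        = h.specialMatrix a a := by
      rw [Matrix.mulVec_single]
      simp [dotProduct, Pi.single_apply]
    have h4 : h.specialMatrix a a ≤ -1 := by
      show (h.G.adjMatrix ℝ) a.1 a.1 - ∑ g : {v // h.isFat v = true},
        (h.G.adjMatrix ℝ) a.1 g.1 * (h.G.adjMatrix ℝ) a.1 g.1 ≤ -1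
      have hdiag : (h.G.adjMatrix ℝ) a.1 a.1 = 0 := by simp
      have hterm : (1:ℝ) ≤ ∑ g : {v // h.isFat v = true},
          (h.G.adjMatrix ℝ) a.1 g.1 * (h.G.adjMatrix ℝ) a.1 g.1 := by
        have hle := Finset.single_le_sum
          (f := fun g : {v // h.isFat v = true} =>
            (h.G.adjMatrix ℝ) a.1 g.1 * (h.G.adjMatrix ℝ) a.1 g.1)
          (fun g _ => mul_self_nonneg _) (Finset.mem_univ f)
        simpa [SimpleGraph.adjMatrix_apply, (show h.G.Adj a.1 f.1 from hadj.symm)] using hle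
      linarith
    rw [h2, h3, mul_one] at h1
    have h1' : μ ≤ h.specialMatrix a a := h1
    linarith
  have hlow : ∀ p : ℕ, μ ≤ minEigM ((h.replace p).adjMatrix ℝ) := by
    intro p
    haveI : Nonempty ({v // h.isFat v = false} ⊕ ({v // h.isFat v = true} × Fin p)) :=
      ⟨Sum.inl hS.some⟩
    refine le_minEigM (hAh p) fun z => ?_
    rw [quad_id h p z, hzz p z]
    have hray := rayleigh_ge hSm (fun a => z (Sum.inl a))
    have hsq : 0 ≤ ∑ f : {v // h.isFat v = true},
        ((∑ a : {v // h.isFat v = false},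
            (if h.G.Adj a.1 f.1 then (1:ℝ) else 0) * z (Sum.inl a))
          + ∑ i : Fin p, z (Sum.inr (f, i)))^2 :=
      Finset.sum_nonneg fun f _ => sq_nonneg _
    have hY : 0 ≤ ∑ f : {v // h.isFat v = true}, ∑ i : Fin p, (z (Sum.inr (f, i)))^2 :=
      Finset.sum_nonneg fun f _ => Finset.sum_nonneg fun i _ => sq_nonneg _
    have hμY : μ * (∑ f : {v // h.isFat v = true}, ∑ i : Fin p, (z (Sum.inr (f, i)))^2)
        ≤ -(∑ f : {v // h.isFat v = true}, ∑ i : Fin p, (z (Sum.inr (f, i)))^2) := by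
      by_cases hF : Nonempty {v // h.isFat v = true}
      · have hm1 := hμ1 hF
        nlinarith [hY]
      · haveI := not_nonempty_iff.mp hF
        simp
    have hray' : μ * ((fun a => z (Sum.inl a)) ⬝ᵥ (fun a => z (Sum.inl a)))
        ≤ (fun a => z (Sum.inl a)) ⬝ᵥ (h.specialMatrix *ᵥ (fun a => z (Sum.inl a))) := hray
    have hexp : ∀ A Y : ℝ, μ * (A + Y) = μ * A + μ * Y := fun A Y => by ring
    linarith [hray', hsq, hμY, hexp (((fun a => z (Sum.inl a)) ⬝ᵥ (fun a => z (Sum.inl a))))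
      (∑ f : {v // h.isFat v = true}, ∑ i : Fin p, (z (Sum.inr (f, i)))^2)]
  obtain ⟨v, hv0, hEig⟩ := mem_spec_iff.mp (minEigM_spec_mem hSm)
  set N := v ⬝ᵥ v with hNdef
  have hNpos : 0 < N := by
    have h2 : N ≠ 0 := fun hc => hv0 (dotProduct_self_eq_zero.mp hc)
    have h3 : 0 ≤ N := Finset.sum_nonneg fun i _ => mul_self_nonneg _
    exact lt_of_le_of_ne h3 (Ne.symm h2)
  have hvSv : v ⬝ᵥ (h.specialMatrix *ᵥ v) = μ * N := by
    rw [hEig, dotProduct_smul, smul_eq_mul]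
    rfl
  set c : {v // h.isFat v = true} → ℝ :=
    fun f => ∑ a : {v // h.isFat v = false},
      (if h.G.Adj a.1 f.1 then (1:ℝ) else 0) * v a with hcdef
  set c2 := ∑ f : {v // h.isFat v = true}, (c f)^2 with hc2def
  have hc2nn : 0 ≤ c2 := Finset.sum_nonneg fun f _ => sq_nonneg _
  have hup : ∀ p : ℕ, 1 ≤ p →
      minEigM ((h.replace p).adjMatrix ℝ) * (N + c2 / p) ≤ μ * N - c2 / p := by
    intro p hp
    have hp0 : (p:ℝ) ≠ 0 := Nat.cast_ne_zero.mpr (by omega)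
    set z : ({v // h.isFat v = false} ⊕ ({v // h.isFat v = true} × Fin p)) → ℝ :=
      Sum.elim v (fun q : {v // h.isFat v = true} × Fin p => -(c q.1) / p) with hzdef
    have h1 := rayleigh_ge (hAh p) z
    have hq : z ⬝ᵥ (((h.replace p).adjMatrix ℝ) *ᵥ z) = μ * N - c2 / p := by
      rw [quad_id h p z]
      simp only [hzdef, Sum.elim_inl, Sum.elim_inr]
      rw [hvSv]
      have hA : (∑ f : {v // h.isFat v = true},
          ((∑ a : {v // h.isFat v = false}, (if h.G.Adj a.1 f.1 then (1:ℝ) else 0) * v a)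
            + ∑ _i : Fin p, -(c f) / p)^2) = 0 := by
        refine Finset.sum_eq_zero fun f _ => ?_
        rw [Finset.sum_const, Finset.card_univ, Fintype.card_fin, nsmul_eq_mul]
        have hcf : (∑ a : {v // h.isFat v = false},
            (if h.G.Adj a.1 f.1 then (1:ℝ) else 0) * v a) = c f := rfl
        rw [hcf]
        field_simp
        ring
      have hB : (∑ f : {v // h.isFat v = true}, ∑ _i : Fin p, (-(c f) / p)^2) = c2 / p := by
        have hBf : ∀ f : {v // h.isFat v = true},
            (∑ _i : Fin p, (-(c f) / p)^2) = (c f)^2 / p := by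
          intro f
          rw [Finset.sum_const, Finset.card_univ, Fintype.card_fin, nsmul_eq_mul]
          field_simp
        rw [Finset.sum_congr rfl fun f _ => hBf f, ← Finset.sum_div, hc2def]
      rw [hA, hB]
      ring
    have hzz' : z ⬝ᵥ z = N + c2 / p := by
      rw [hzz p z]
      simp only [hzdef, Sum.elim_inl, Sum.elim_inr]
      have hB : (∑ f : {v // h.isFat v = true}, ∑ _i : Fin p, (-(c f) / p)^2) = c2 / p := by
        have hBf : ∀ f : {v // h.isFat v = true},
            (∑ _i : Fin p, (-(c f) / p)^2) = (c f)^2 / p := by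
          intro f
          rw [Finset.sum_const, Finset.card_univ, Fintype.card_fin, nsmul_eq_mul]
          field_simp
        rw [Finset.sum_congr rfl fun f _ => hBf f, ← Finset.sum_div, hc2def]
      rw [hB]
    rw [hq, hzz'] at h1
    exact h1
  have hc0 : Tendsto (fun p : ℕ => c2 / (p:ℝ)) atTop (nhds 0) :=
    tendsto_const_div_atTop_nhds_zero_nat c2
  have hnum : Tendsto (fun p : ℕ => μ * N - c2 / (p:ℝ)) atTop (nhds (μ * N)) := by
    simpa using tendsto_const_nhds.sub hc0
  have hden : Tendsto (fun p : ℕ => N + c2 / (p:ℝ)) atTop (nhds N) := by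
    simpa using tendsto_const_nhds.add hc0
  have hgl : Tendsto (fun p : ℕ => (μ * N - c2 / (p:ℝ)) / (N + c2 / (p:ℝ))) atTop (nhds μ) := by
    have hdiv := hnum.div hden hNpos.ne'
    rwa [mul_div_cancel_right₀ μ hNpos.ne'] at hdiv
  refine ⟨fun p _ => by rw [hgd p]; exact hlow p, ?_⟩
  refine tendsto_of_tendsto_of_tendsto_of_le_of_le' tendsto_const_nhds hgl ?_ ?_
  · exact Eventually.of_forall fun p => by rw [hgd p]; exact hlow p
  · filter_upwards [eventually_ge_atTop 1] with p hp
    rw [hgd p]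
    have h2 := hup p hp
    have hppos : (0:ℝ) < p := by exact_mod_cast Nat.lt_of_lt_of_le Nat.zero_lt_one hp
    have hdpos : 0 < N + c2 / p :=
      add_pos_of_pos_of_nonneg hNpos (div_nonneg hc2nn hppos.le)
    rw [le_div_iff₀ hdpos]
    exact h2
end

section
/- Let c_n be the Hoffman graph obtained from the complete graph K_{n+1} (all slim) by attaching one fat vertex to exactly n of its vertices. Then λ_min(c_n) = (−1 − √(1 + 4n))/2. -/
open Matrix Filter

/-- `c_n`: the Hoffman graph obtained from the complete graph `K_{n+1}` (all slim) by
attaching one fat vertex (`none`) to exactly the `n` vertices of index `< n`. -/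
def cN (n : ℕ) (hn : 0 < n) : HoffmanGraph (Option (Fin (n + 1))) where
  G :=
    { Adj := fun x y =>
        match x, y with
        | some a, some b => a ≠ b
        | some a, none => (a : ℕ) < n
        | none, some a => (a : ℕ) < n
        | none, none => False
      symm := by
        constructor
        rintro (_ | a) (_ | b) hadj
        · exact hadj
        · exact hadj
        · exact hadj
        · exact hadj.symm
      loopless := by
        constructor
        rintro (_ | a) hadj
        · exact hadj
        · exact hadj rfl }
  isFat := fun x => x.isNone
  fat_not_adj := by rintro (_ | u) (_ | v) hu hv hadj <;> simp_all
  fat_has_slim := by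
    rintro (_ | u) hu
    · exact ⟨some ⟨0, by omega⟩, rfl, hn⟩
    · simp at hu

lemma mem_spectrum_iff_exists {m : Type*} [Fintype m] [DecidableEq m] (A : Matrix m m ℝ) (μ : ℝ) :
    μ ∈ spectrum ℝ A ↔ ∃ x ≠ 0, A.mulVec x = μ • x := by
  rw [spectrum.mem_iff, Matrix.isUnit_iff_isUnit_det, isUnit_iff_ne_zero, not_not,
    ← Matrix.exists_mulVec_eq_zero_iff]
  constructor
  · rintro ⟨x, hx, h⟩
    refine ⟨x, hx, ?_⟩
    have := h
    rw [Algebra.algebraMap_eq_smul_one, Matrix.sub_mulVec, Matrix.smul_mulVec,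
      Matrix.one_mulVec, sub_eq_zero] at this
    exact this.symm
  · rintro ⟨x, hx, h⟩
    refine ⟨x, hx, ?_⟩
    rw [Algebra.algebraMap_eq_smul_one, Matrix.sub_mulVec, Matrix.smul_mulVec,
      Matrix.one_mulVec, sub_eq_zero, h]

/-- Concrete special matrix of `c_n` on `Fin (n+1)`. -/
noncomputable def cMat (n : ℕ) : Matrix (Fin (n + 1)) (Fin (n + 1)) ℝ :=
  Matrix.of fun i j => (if i = j then 0 else 1) -
    (if (i : ℕ) < n then 1 else 0) * (if (j : ℕ) < n then 1 else 0)

def cEquiv (n : ℕ) (hn : 0 < n) : Fin (n + 1) ≃ {v // (cN n hn).isFat v = false} where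
  toFun a := ⟨some a, rfl⟩
  invFun v := match v with
    | ⟨some a, _⟩ => a
    | ⟨none, h⟩ => Bool.noConfusion (show true = false from h)
  left_inv a := rfl
  right_inv v := by
    rcases v with ⟨(_ | a), h⟩
    · exact Bool.noConfusion (show true = false from h)
    · rfl

lemma special_eq (n : ℕ) (hn : 0 < n) :
    (cN n hn).specialMatrix = Matrix.reindexAlgEquiv ℝ ℝ (cEquiv n hn) (cMat n) := by
  letI : Unique {v // (cN n hn).isFat v = true} :=
    ⟨⟨⟨none, rfl⟩⟩, by
      rintro ⟨(_ | a), h⟩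
      · rfl
      · exact Bool.noConfusion (show false = true from h)⟩
  ext ⟨(_ | a), ha⟩ ⟨(_ | b), hb⟩
  · exact Bool.noConfusion (show true = false from ha)
  · exact Bool.noConfusion (show true = false from ha)
  · exact Bool.noConfusion (show true = false from hb)
  · simp only [HoffmanGraph.specialMatrix, Matrix.reindexAlgEquiv_apply, Matrix.reindex_apply,
      Matrix.submatrix_apply, Fintype.sum_unique]
    have h1 : (cEquiv n hn).symm ⟨some a, ha⟩ = a := rfl
    have h2 : (cEquiv n hn).symm ⟨some b, hb⟩ = b := rfl
    rw [h1, h2]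
    simp only [cMat, Matrix.of_apply, SimpleGraph.adjMatrix_apply]
    have hd : ((default : {v // (cN n hn).isFat v = true}) : Option (Fin (n + 1))) = none := rfl
    have Hab : (cN n hn).G.Adj (some a) (some b) ↔ a ≠ b := Iff.rfl
    have Ha : (cN n hn).G.Adj (some a) none ↔ (a : ℕ) < n := Iff.rfl
    have Hb : (cN n hn).G.Adj (some b) none ↔ (b : ℕ) < n := Iff.rfl
    rw [hd]
    simp only [Hab, Ha, Hb]
    by_cases hab : a = b <;> by_cases han : (a : ℕ) < n <;> by_cases hbn : (b : ℕ) < n <;>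
      simp [hab, han, hbn]


lemma cMat_mulVec (n : ℕ) (x : Fin (n + 1) → ℝ) (i : Fin (n + 1)) :
    (cMat n).mulVec x i = (∑ j : Fin (n + 1), x j) - x i -
      (if (i : ℕ) < n then 1 else 0) *
        (∑ j : Fin (n + 1), (if (j : ℕ) < n then (1 : ℝ) else 0) * x j) := by
  simp only [Matrix.mulVec, dotProduct, cMat, Matrix.of_apply]
  have key : ∀ j : Fin (n + 1), ((if i = j then (0:ℝ) else 1) -
      (if (i : ℕ) < n then 1 else 0) * (if (j : ℕ) < n then 1 else 0)) * x j
      = x j - (if i = j then x j else 0) -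
        (if (i : ℕ) < n then 1 else 0) * ((if (j : ℕ) < n then (1:ℝ) else 0) * x j) := by
    intro j; split_ifs <;> ring
  rw [Finset.sum_congr rfl fun j _ => key j]
  rw [Finset.sum_sub_distrib, Finset.sum_sub_distrib, ← Finset.mul_sum, Finset.sum_ite_eq]
  simp

lemma card_sum (n : ℕ) : (∑ j : Fin (n + 1), (if (j : ℕ) < n then (1 : ℝ) else 0)) = n := by
  rw [Fin.sum_univ_castSucc]
  simp [Fin.is_lt]

lemma sqrt_sq' (n : ℕ) : Real.sqrt (1 + 4 * (n : ℝ)) ^ 2 = 1 + 4 * (n : ℝ) := by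
  rw [Real.sq_sqrt]; positivity

lemma lam_mem (n : ℕ) (hn : 0 < n) :
    ((-1 - Real.sqrt (1 + 4 * (n : ℝ))) / 2) ∈ spectrum ℝ (cMat n) := by
  set r := Real.sqrt (1 + 4 * (n : ℝ)) with hr
  set μ := (-1 - r) / 2 with hμ
  have hr2 : r ^ 2 = 1 + 4 * (n : ℝ) := sqrt_sq' n
  have hquad : μ ^ 2 + μ = n := by rw [hμ]; nlinarith [hr2]
  rw [mem_spectrum_iff_exists]
  refine ⟨fun j => if (j : ℕ) < n then 1 else μ + 1, ?_, ?_⟩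
  · intro h
    have h0 : (if ((0 : Fin (n + 1)) : ℕ) < n then (1:ℝ) else μ + 1) = 0 := congrFun h 0
    simp [hn] at h0
  · funext i
    rw [cMat_mulVec]
    have hT : (∑ j : Fin (n + 1), (if (j : ℕ) < n then (1:ℝ) else μ + 1)) = n + (μ + 1) := by
      rw [Fin.sum_univ_castSucc]
      simp [Fin.is_lt]
    have hs : (∑ j : Fin (n + 1), (if (j : ℕ) < n then (1:ℝ) else 0) *
        (if (j : ℕ) < n then (1:ℝ) else μ + 1)) = n := by
      have key : ∀ j : Fin (n + 1), (if (j : ℕ) < n then (1:ℝ) else 0) *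
          (if (j : ℕ) < n then (1:ℝ) else μ + 1) = (if (j : ℕ) < n then (1:ℝ) else 0) := by
        intro j; split_ifs <;> ring
      rw [Finset.sum_congr rfl fun j _ => key j, card_sum]
    rw [hT, hs]
    by_cases hi : (i : ℕ) < n <;> simp [hi] <;> nlinarith [hquad]

lemma spec_lb (n : ℕ) (hn : 0 < n) (μ : ℝ) (hμ : μ ∈ spectrum ℝ (cMat n)) :
    (-1 - Real.sqrt (1 + 4 * (n : ℝ))) / 2 ≤ μ := by
  set r := Real.sqrt (1 + 4 * (n : ℝ)) with hr
  have hr2 : r ^ 2 = 1 + 4 * (n : ℝ) := sqrt_sq' n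
  have hr0 : 0 ≤ r := Real.sqrt_nonneg _
  have hncast : (0:ℝ) ≤ (n:ℝ) := by positivity
  rw [mem_spectrum_iff_exists] at hμ
  obtain ⟨x, hx, hxe⟩ := hμ
  have E : ∀ i : Fin (n + 1), (∑ j : Fin (n + 1), x j) - x i -
      (if (i : ℕ) < n then 1 else 0) *
        (∑ j : Fin (n + 1), (if (j : ℕ) < n then (1:ℝ) else 0) * x j)
      = μ * x i := by
    intro i
    have h := congrFun hxe i
    rw [cMat_mulVec] at h
    simpa using h
  by_cases hμ1 : μ = -1
  · subst hμ1; nlinarith [hr2, hr0, hncast]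
  set T := ∑ j : Fin (n + 1), x j with hT
  set s := ∑ j : Fin (n + 1), (if (j : ℕ) < n then (1:ℝ) else 0) * x j with hs
  have h0n : ((0 : Fin (n + 1)) : ℕ) < n := hn
  set c := x 0 with hc
  set z := x (Fin.last n) with hz
  have hlast : ¬ ((Fin.last n : Fin (n + 1)) : ℕ) < n := by simp
  have E0 : T - c - s = μ * c := by have h := E 0; rw [if_pos h0n] at h; simpa using h
  have En : T - z = μ * z := by have h := E (Fin.last n); rw [if_neg hlast] at h; simpa using h
  have hconst : ∀ i : Fin (n + 1), (i : ℕ) < n → x i = c := by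
    intro i hi
    have Ei : T - x i - s = μ * x i := by have h := E i; rw [if_pos hi] at h; simpa using h
    have h2 : (μ + 1) * x i = (μ + 1) * c := by nlinarith [Ei, E0]
    have hne : μ + 1 ≠ 0 := fun h => hμ1 (by linarith)
    exact mul_left_cancel₀ hne h2
  have hsv : s = n * c := by
    rw [hs, Fin.sum_univ_castSucc]
    have key : ∀ i : Fin n, (if ((Fin.castSucc i : Fin (n+1)) : ℕ) < n then (1:ℝ) else 0) *
        x (Fin.castSucc i) = c := by
      intro i
      have hi : ((Fin.castSucc i : Fin (n+1)) : ℕ) < n := i.is_lt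
      rw [if_pos hi, one_mul, hconst _ hi]
    rw [Finset.sum_congr rfl fun i _ => key i, if_neg hlast]
    simp
  have hTv : T = n * c + z := by
    rw [hT, Fin.sum_univ_castSucc]
    have key : ∀ i : Fin n, x (Fin.castSucc i) = c := fun i => hconst _ i.is_lt
    rw [Finset.sum_congr rfl fun i _ => key i]
    simp [hz]
  have hzc : z = (μ + 1) * c := by
    have h1 : z = μ * c + c := by linarith [E0, hsv, hTv]
    rw [h1]; ring
  have h5 : (n : ℝ) * c = μ * z := by linarith [En, hTv]
  have hcne : c ≠ 0 := by
    intro h0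
    apply hx
    funext i
    simp only [Pi.zero_apply]
    by_cases hi : (i : ℕ) < n
    · rw [hconst i hi, h0]
    · have hil : i = Fin.last n := by
        apply Fin.ext
        have := i.is_lt
        simp only [Fin.val_last]
        omega
      rw [hil, ← hz, hzc, h0, mul_zero]
  have hquad : μ ^ 2 + μ = n := by
    have h6 : (μ ^ 2 + μ) * c = (n : ℝ) * c := by
      calc (μ ^ 2 + μ) * c = μ * ((μ + 1) * c) := by ring
        _ = μ * z := by rw [← hzc]
        _ = (n : ℝ) * c := h5.symm
    have := mul_right_cancel₀ hcne h6
    linarith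
  have key : (2 * μ + 1 + r) * (2 * μ + 1 - r) = 0 := by linear_combination 4 * hquad - hr2
  rcases mul_eq_zero.mp key with h | h
  · linarith
  · linarith

/-- `λ_min(c_n) = (-1 - √(1 + 4n))/2`. -/
theorem stmt13 (n : ℕ) (hn : 0 < n) :
    (cN n hn).minEig = (-1 - Real.sqrt (1 + 4 * (n : ℝ))) / 2 := by
  have hsp : spectrum ℝ ((cN n hn).specialMatrix) = spectrum ℝ (cMat n) := by
    rw [special_eq n hn]; exact AlgEquiv.spectrum_eq _ _
  unfold HoffmanGraph.minEig minEigM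
  rw [hsp]
  apply le_antisymm
  · exact csInf_le ⟨_, fun μ hμ => spec_lb n hn μ hμ⟩ (lam_mem n hn)
  · exact le_csInf ⟨_, lam_mem n hn⟩ fun μ hμ => spec_lb n hn μ hμ
end
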